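/- (Asymmetric-noise risk bound) Let L satisfy: (i) L(e_i, p₂,…,p_M) = 0 iff all p_j = e_i; (ii) 0 ≤ L ≤ C₁; (iii) L(e_i, e_j,…,e_j) = C₂ ≤ C₁ for i ≠ j; and B_L ≤ ∑_{i=1}^K L(e_i, x, f) ≤ B_U for all x, f. Under class-dependent noise with flip probabilities η_{ij} satisfying η_{ij} < 1 − η_{ii} for all i ≠ j, if the minimizer f* of the clean risk has R_L(f*) = 0, then 0 ≤ R^η_L(f*) − R^η_L(f*_η) ≤ (B_U − B_L)·E_D[1 − η_{yy}] + (C₁ − C₂)·E_D[∑_{i≠y}(1 − η_{yy} − η_{yi})]. -/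

import Mathlib

open Real Finset MeasureTheory

/-- One-hot probability vector at class `c`. -/
noncomputable def onehot {K : ℕ} (c : Fin K) : Fin K → ℝ := fun k => if k = c then 1 else 0

private lemma sum_erase_eq' {K : ℕ} (η : Fin K → Fin K → ℝ) (c : Fin K)
    (hrow : ∑ j, η c j = 1) :
    ∑ j ∈ Finset.univ.erase c, η c j = 1 - η c c := by
  have h := Finset.add_sum_erase Finset.univ (fun j => η c j) (Finset.mem_univ c)
  rw [hrow] at h
  linarith

private lemma coef_sum' {K : ℕ} (η : Fin K → Fin K → ℝ) (c : Fin K)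
    (hrow : ∑ j, η c j = 1) :
    ∑ j ∈ Finset.univ.erase c, (1 - η c c - η c j)
      = ((K : ℝ) - 1) * (1 - η c c) - (1 - η c c) := by
  rw [Finset.sum_sub_distrib, Finset.sum_const, sum_erase_eq' η c hrow,
    Finset.card_erase_of_mem (Finset.mem_univ c), Finset.card_univ, Fintype.card_fin,
    nsmul_eq_mul, Nat.cast_sub c.pos, Nat.cast_one]

private lemma ptwise' {K : ℕ} (η : Fin K → Fin K → ℝ) (g : Fin K → ℝ) (c : Fin K)
    (C₁ C₂ BL BU : ℝ)
    (hη0 : ∀ j, 0 ≤ η c j) (hrow : ∑ j, η c j = 1)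
    (hdom : ∀ j, j ≠ c → η c j < 1 - η c c)
    (hg1 : ∀ j, g j ≤ C₁)
    (hBL : BL ≤ ∑ j, g j) (hBU : ((K : ℝ) - 1) * C₂ ≤ BU) :
    C₂ * (1 - η c c) - ((1 - η c c) * g c + ∑ j ∈ Finset.univ.erase c, η c j * g j)
      ≤ (BU - BL) * (1 - η c c)
        + (C₁ - C₂) * ∑ j ∈ Finset.univ.erase c, (1 - η c c - η c j) := by
  have ht0 : 0 ≤ 1 - η c c := by
    have h := sum_erase_eq' η c hrow
    have h2 : 0 ≤ ∑ j ∈ Finset.univ.erase c, η c j :=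
      Finset.sum_nonneg fun j _ => hη0 j
    linarith
  have expand : ∑ j ∈ Finset.univ.erase c, (1 - η c c - η c j) * g j
      = (1 - η c c) * (∑ j ∈ Finset.univ.erase c, g j)
        - ∑ j ∈ Finset.univ.erase c, η c j * g j := by
    rw [Finset.mul_sum, ← Finset.sum_sub_distrib]
    exact Finset.sum_congr rfl fun j _ => by ring
  have hGeq : (1 - η c c) * g c + ∑ j ∈ Finset.univ.erase c, η c j * g j
      = (1 - η c c) * (∑ j, g j)
        - ∑ j ∈ Finset.univ.erase c, (1 - η c c - η c j) * g j := by
    rw [expand, ← Finset.add_sum_erase Finset.univ g (Finset.mem_univ c)]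
    ring
  have hcoef : ∀ j ∈ Finset.univ.erase c, 0 ≤ 1 - η c c - η c j := fun j hj => by
    have := hdom j (Finset.ne_of_mem_erase hj)
    linarith
  have hboundsum : ∑ j ∈ Finset.univ.erase c, (1 - η c c - η c j) * g j
      ≤ (∑ j ∈ Finset.univ.erase c, (1 - η c c - η c j)) * C₁ := by
    rw [Finset.sum_mul]
    exact Finset.sum_le_sum fun j hj => mul_le_mul_of_nonneg_left (hg1 j) (hcoef j hj)
  have hG_lb : (1 - η c c) * BL
        - (∑ j ∈ Finset.univ.erase c, (1 - η c c - η c j)) * C₁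
      ≤ (1 - η c c) * g c + ∑ j ∈ Finset.univ.erase c, η c j * g j := by
    rw [hGeq]
    have h1 := mul_le_mul_of_nonneg_left hBL ht0
    linarith [hboundsum]
  have hsc := coef_sum' η c hrow
  have hCS : C₂ * (∑ j ∈ Finset.univ.erase c, (1 - η c c - η c j))
      = C₂ * (((K : ℝ) - 1) * (1 - η c c)) - C₂ * (1 - η c c) := by
    rw [hsc]; ring
  have hmul : ((K : ℝ) - 1) * C₂ * (1 - η c c) ≤ BU * (1 - η c c) :=
    mul_le_mul_of_nonneg_right hBU ht0
  nlinarith [hG_lb, hCS, hmul]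

theorem asymmetric_noise_risk_bound
    {X F Ω : Type*} [MeasurableSpace Ω]
    (μ : Measure Ω) [IsProbabilityMeasure μ]
    {K M : ℕ}
    (x : Ω → X) (y : Ω → Fin K)
    -- the loss takes a label distribution and M predictive distributions
    (ℓ : (Fin K → ℝ) → (Fin M → Fin K → ℝ) → ℝ)
    -- the predictions of a classifier f on input a
    (P : X → F → Fin M → Fin K → ℝ)
    (C₁ C₂ BL BU : ℝ) (hC : C₂ ≤ C₁)
    -- condition (i): the loss vanishes iff all predictions are the one-hot label
    (hcond1 : ∀ (i : Fin K) (ps : Fin M → Fin K → ℝ),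
        ℓ (onehot i) ps = 0 ↔ ∀ j, ps j = onehot i)
    -- condition (ii): the loss is bounded between 0 and C₁
    (hcond2 : ∀ (i : Fin K) (ps : Fin M → Fin K → ℝ),
        0 ≤ ℓ (onehot i) ps ∧ ℓ (onehot i) ps ≤ C₁)
    -- condition (iii): all predictions equal to a wrong one-hot give the constant C₂
    (hcond3 : ∀ i j : Fin K, i ≠ j → ℓ (onehot i) (fun _ => onehot j) = C₂)
    -- sum-over-labels bounds
    (hbounds : ∀ (a : X) (f : F), BL ≤ ∑ i, ℓ (onehot i) (P a f)
        ∧ ∑ i, ℓ (onehot i) (P a f) ≤ BU)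
    -- class-dependent noise rates
    (η : Fin K → Fin K → ℝ) (hη0 : ∀ i j, 0 ≤ η i j)
    (hηrow : ∀ i, ∑ j, η i j = 1)
    (hηdom : ∀ i j : Fin K, i ≠ j → η i j < 1 - η i i)
    (Fcl : Set F) (fstar feta : F) (hfs : fstar ∈ Fcl) (hfe : feta ∈ Fcl)
    (hint : ∀ f ∈ Fcl, Integrable (fun ω => ℓ (onehot (y ω)) (P (x ω) f)) μ)
    (hint' : ∀ f ∈ Fcl, ∀ i : Fin K, Integrable (fun ω => ℓ (onehot i) (P (x ω) f)) μ) :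
    let R : F → ℝ := fun f => ∫ ω, ℓ (onehot (y ω)) (P (x ω) f) ∂μ
    let Rη : F → ℝ := fun f => ∫ ω,
      ((1 - η (y ω) (y ω)) * ℓ (onehot (y ω)) (P (x ω) f)
        + ∑ i ∈ Finset.univ.erase (y ω), η (y ω) i * ℓ (onehot i) (P (x ω) f)) ∂μ
    (∀ g ∈ Fcl, R fstar ≤ R g) → (∀ g ∈ Fcl, Rη feta ≤ Rη g) →
    R fstar = 0 →
    0 ≤ Rη fstar - Rη feta
    ∧ Rη fstar - Rη feta
        ≤ (BU - BL) * (∫ ω, (1 - η (y ω) (y ω)) ∂μ)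
          + (C₁ - C₂) * (∫ ω, (∑ i ∈ Finset.univ.erase (y ω),
              (1 - η (y ω) (y ω) - η (y ω) i)) ∂μ) := by
  intro R Rη hmin hminη hR0
  have hpart1 : 0 ≤ Rη fstar - Rη feta := sub_nonneg.2 (hminη fstar hfs)
  refine ⟨hpart1, ?_⟩
  -- basic facts about η
  have hηle1 : ∀ i j, η i j ≤ 1 := by
    intro i j
    have h := Finset.single_le_sum (f := fun k => η i k) (fun k _ => hη0 i k)
      (Finset.mem_univ j)
    rw [hηrow i] at h
    exact h
  have ht0 : ∀ i, 0 ≤ 1 - η i i := fun i => sub_nonneg.2 (hηle1 i i)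
  -- a.e. the loss of fstar vanishes
  have hzero : (fun ω => ℓ (onehot (y ω)) (P (x ω) fstar)) =ᵐ[μ] 0 := by
    rw [← integral_eq_zero_iff_of_nonneg (fun ω => (hcond2 (y ω) (P (x ω) fstar)).1)
      (hint fstar hfs)]
    exact hR0
  have hA : ∀ᵐ ω ∂μ, ∀ i : Fin K,
      ℓ (onehot i) (P (x ω) fstar) = if i = y ω then 0 else C₂ := by
    filter_upwards [hzero] with ω h0
    have h0' : ℓ (onehot (y ω)) (P (x ω) fstar) = 0 := h0
    intro i
    by_cases hi : i = y ω
    · rw [if_pos hi, hi]; exact h0'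
    · have hP : P (x ω) fstar = fun _ => onehot (y ω) :=
        funext ((hcond1 (y ω) (P (x ω) fstar)).1 h0')
      rw [if_neg hi, hP]
      exact hcond3 i (y ω) hi
  -- pick an ω₀ in the a.e. set
  haveI : (ae μ).NeBot := ae_neBot.mpr (IsProbabilityMeasure.ne_zero μ)
  obtain ⟨ω₀, hω₀⟩ := hA.exists
  have hBLBU : BL ≤ BU := (hbounds (x ω₀) fstar).1.trans (hbounds (x ω₀) fstar).2
  have hC₁0 : 0 ≤ C₁ :=
    le_trans (hcond2 (y ω₀) (P (x ω₀) fstar)).1 (hcond2 (y ω₀) (P (x ω₀) fstar)).2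
  have hK1 : 1 ≤ K := (y ω₀).pos
  have hBU : ((K : ℝ) - 1) * C₂ ≤ BU := by
    have h2 := (hbounds (x ω₀) fstar).2
    have hs : ∑ i, ℓ (onehot i) (P (x ω₀) fstar) = ((K : ℝ) - 1) * C₂ := by
      rw [Finset.sum_congr rfl (fun i _ => hω₀ i),
        ← Finset.add_sum_erase Finset.univ _ (Finset.mem_univ (y ω₀)), if_pos rfl]
      rw [Finset.sum_congr rfl
        (fun i hi => if_neg (Finset.ne_of_mem_erase hi) :
          ∀ i ∈ Finset.univ.erase (y ω₀),
            (if i = y ω₀ then 0 else C₂) = C₂)]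
      rw [Finset.sum_const, Finset.card_erase_of_mem (Finset.mem_univ (y ω₀)),
        Finset.card_univ, Fintype.card_fin, nsmul_eq_mul, Nat.cast_sub hK1, Nat.cast_one]
      ring
    rw [hs] at h2
    exact h2
  -- nonnegativity facts needed in both cases
  have hSnn : ∀ ω, 0 ≤ ∑ i ∈ Finset.univ.erase (y ω),
      (1 - η (y ω) (y ω) - η (y ω) i) := by
    intro ω
    refine Finset.sum_nonneg fun i hi => ?_
    have := hηdom (y ω) i (Finset.ne_of_mem_erase hi).symm
    linarith
  by_cases hC₂ : C₂ = 0
  · -- C₂ = 0 : both noisy risks vanish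
    have hRfs : Rη fstar = 0 := by
      show (∫ ω, ((1 - η (y ω) (y ω)) * ℓ (onehot (y ω)) (P (x ω) fstar)
        + ∑ i ∈ Finset.univ.erase (y ω), η (y ω) i * ℓ (onehot i) (P (x ω) fstar)) ∂μ) = 0
      have heq : (fun ω => (1 - η (y ω) (y ω)) * ℓ (onehot (y ω)) (P (x ω) fstar)
          + ∑ i ∈ Finset.univ.erase (y ω), η (y ω) i * ℓ (onehot i) (P (x ω) fstar))
          =ᵐ[μ] 0 := by
        filter_upwards [hA] with ω hω
        have h1 : ∀ i, ℓ (onehot i) (P (x ω) fstar) = 0 := by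
          intro i; rw [hω i, hC₂]; simp
        simp [h1]
      exact integral_eq_zero_of_ae heq
    have hRfe : 0 ≤ Rη feta := by
      refine integral_nonneg fun ω => ?_
      exact add_nonneg (mul_nonneg (ht0 (y ω)) (hcond2 (y ω) (P (x ω) feta)).1)
        (Finset.sum_nonneg fun i _ =>
          mul_nonneg (hη0 (y ω) i) (hcond2 i (P (x ω) feta)).1)
    have hle : Rη feta ≤ Rη fstar := hminη fstar hfs
    have hα : 0 ≤ ∫ ω, (1 - η (y ω) (y ω)) ∂μ := integral_nonneg fun ω => ht0 (y ω)
    have hβ : 0 ≤ ∫ ω, (∑ i ∈ Finset.univ.erase (y ω),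
        (1 - η (y ω) (y ω) - η (y ω) i)) ∂μ := integral_nonneg hSnn
    have h1 : 0 ≤ (BU - BL) * (∫ ω, (1 - η (y ω) (y ω)) ∂μ) :=
      mul_nonneg (by linarith) hα
    have h2 : 0 ≤ (C₁ - C₂) * (∫ ω, (∑ i ∈ Finset.univ.erase (y ω),
        (1 - η (y ω) (y ω) - η (y ω) i)) ∂μ) := mul_nonneg (by linarith) hβ
    linarith
  · -- C₂ ≠ 0 : main case
    set χ : Fin K → Ω → ℝ := fun i ω => 1 - ℓ (onehot i) (P (x ω) fstar) * C₂⁻¹ with hχdef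
    have hχm : ∀ i, AEStronglyMeasurable (χ i) μ := fun i =>
      aestronglyMeasurable_const.sub ((hint' fstar hfs i).aestronglyMeasurable.mul_const C₂⁻¹)
    have hχ : ∀ᵐ ω ∂μ, ∀ i, χ i ω = if i = y ω then 1 else 0 := by
      filter_upwards [hA] with ω hω i
      show 1 - ℓ (onehot i) (P (x ω) fstar) * C₂⁻¹ = _
      rw [hω i]
      by_cases hi : i = y ω
      · rw [if_pos hi, if_pos hi]; simp
      · rw [if_neg hi, if_neg hi, mul_inv_cancel₀ hC₂]; ring
    -- master a.e.-selection lemma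
    have key : ∀ d : Fin K → Ω → ℝ,
        (fun ω => ∑ i, χ i ω * d i ω) =ᵐ[μ] (fun ω => d (y ω) ω) := by
      intro d
      filter_upwards [hχ] with ω hω
      simp only [hω, ite_mul, one_mul, zero_mul]
      rw [Finset.sum_ite_eq' Finset.univ (y ω) (fun i => d i ω)]
      simp
    -- integrability helper
    have hInt : ∀ (d : Fin K → Ω → ℝ) (C : ℝ),
        (∀ i, AEStronglyMeasurable (d i) μ) → (∀ ω, |d (y ω) ω| ≤ C) →
        Integrable (fun ω => ∑ i, χ i ω * d i ω) μ := by
      intro d C hd hbd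
      have hm : AEStronglyMeasurable (fun ω => ∑ i, χ i ω * d i ω) μ :=
        Finset.aestronglyMeasurable_fun_sum Finset.univ fun i _ => (hχm i).mul (hd i)
      refine (integrable_const C).mono' hm ?_
      filter_upwards [key d] with ω h
      rw [h]
      simpa [Real.norm_eq_abs] using hbd ω
    -- the four function families
    set dT : Fin K → Ω → ℝ := fun i _ => C₂ * (1 - η i i) with hdT
    set dA : Fin K → Ω → ℝ := fun i _ => 1 - η i i with hdA
    set dB : Fin K → Ω → ℝ := fun i _ =>
      ∑ j ∈ Finset.univ.erase i, (1 - η i i - η i j) with hdB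
    set dG : Fin K → Ω → ℝ := fun i ω =>
      (1 - η i i) * ℓ (onehot i) (P (x ω) feta)
        + ∑ j ∈ Finset.univ.erase i, η i j * ℓ (onehot j) (P (x ω) feta) with hdG
    -- integrability of the four
    have hTi : Integrable (fun ω => ∑ i, χ i ω * dT i ω) μ := by
      refine hInt dT |C₂| (fun i => aestronglyMeasurable_const) fun ω => ?_
      have h1 := ht0 (y ω)
      have h2 := hη0 (y ω) (y ω)
      rw [hdT, abs_mul]
      calc |C₂| * |1 - η (y ω) (y ω)| ≤ |C₂| * 1 := by
            refine mul_le_mul_of_nonneg_left ?_ (abs_nonneg _)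
            rw [abs_le]; constructor <;> linarith
        _ = |C₂| := mul_one _
    have hAi : Integrable (fun ω => ∑ i, χ i ω * dA i ω) μ := by
      refine hInt dA 1 (fun i => aestronglyMeasurable_const) fun ω => ?_
      have h1 := ht0 (y ω)
      have h2 := hη0 (y ω) (y ω)
      rw [hdA, abs_le]; constructor <;> simp <;> linarith
    have hBi : Integrable (fun ω => ∑ i, χ i ω * dB i ω) μ := by
      refine hInt dB (K : ℝ) (fun i => aestronglyMeasurable_const) fun ω => ?_
      rw [abs_le]
      constructor
      · have := hSnn ω
        have hK0 : (0:ℝ) ≤ (K:ℝ) := Nat.cast_nonneg K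
        simp only [hdB]
        linarith
      · simp only [hdB]
        calc ∑ j ∈ Finset.univ.erase (y ω), (1 - η (y ω) (y ω) - η (y ω) j)
            ≤ ∑ j ∈ Finset.univ.erase (y ω), 1 := by
              refine Finset.sum_le_sum fun j hj => ?_
              have := hη0 (y ω) (y ω); have := hη0 (y ω) j
              linarith
          _ = ((Finset.univ.erase (y ω)).card : ℝ) := by simp
          _ ≤ (K : ℝ) := by
              have := Finset.card_erase_le (a := y ω) (s := (Finset.univ : Finset (Fin K)))
              have h2 : ((Finset.univ.erase (y ω)).card : ℕ) ≤ K := by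
                simpa [Finset.card_univ] using this
              exact_mod_cast h2
    have hGi : Integrable (fun ω => ∑ i, χ i ω * dG i ω) μ := by
      refine hInt dG (C₁ + C₁) (fun i =>
        ((hint' feta hfe i).aestronglyMeasurable.const_mul _).add
          (Finset.aestronglyMeasurable_fun_sum _ fun j _ =>
            (hint' feta hfe j).aestronglyMeasurable.const_mul _)) fun ω => ?_
      simp only [hdG]
      have hg0 : ∀ j, 0 ≤ ℓ (onehot j) (P (x ω) feta) := fun j => (hcond2 j _).1
      have hg1 : ∀ j, ℓ (onehot j) (P (x ω) feta) ≤ C₁ := fun j => (hcond2 j _).2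
      have ht1 : 1 - η (y ω) (y ω) ≤ 1 := by have := hη0 (y ω) (y ω); linarith
      have h1 : (1 - η (y ω) (y ω)) * ℓ (onehot (y ω)) (P (x ω) feta) ≤ 1 * C₁ :=
        mul_le_mul ht1 (hg1 _) (hg0 _) zero_le_one
      have h2 : ∑ j ∈ Finset.univ.erase (y ω), η (y ω) j * ℓ (onehot j) (P (x ω) feta)
          ≤ ∑ j ∈ Finset.univ.erase (y ω), η (y ω) j * C₁ :=
        Finset.sum_le_sum fun j _ => mul_le_mul_of_nonneg_left (hg1 j) (hη0 (y ω) j)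
      have h3 : ∑ j ∈ Finset.univ.erase (y ω), η (y ω) j * C₁
          = (1 - η (y ω) (y ω)) * C₁ := by
        rw [← Finset.sum_mul, sum_erase_eq' η (y ω) (hηrow (y ω))]
      have h4 : (1 - η (y ω) (y ω)) * C₁ ≤ 1 * C₁ :=
        mul_le_mul_of_nonneg_right ht1 hC₁0
      have h5 : 0 ≤ (1 - η (y ω) (y ω)) * ℓ (onehot (y ω)) (P (x ω) feta) :=
        mul_nonneg (ht0 (y ω)) (hg0 _)
      have h6 : 0 ≤ ∑ j ∈ Finset.univ.erase (y ω), η (y ω) j * ℓ (onehot j) (P (x ω) feta) :=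
        Finset.sum_nonneg fun j _ => mul_nonneg (hη0 (y ω) j) (hg0 j)
      rw [abs_le]; constructor <;> linarith
    -- a.e. identification of the fstar noisy integrand
    have hfsT : (fun ω => (1 - η (y ω) (y ω)) * ℓ (onehot (y ω)) (P (x ω) fstar)
        + ∑ i ∈ Finset.univ.erase (y ω), η (y ω) i * ℓ (onehot i) (P (x ω) fstar))
        =ᵐ[μ] (fun ω => dT (y ω) ω) := by
      filter_upwards [hA] with ω hω
      have hy : ℓ (onehot (y ω)) (P (x ω) fstar) = 0 := by rw [hω (y ω), if_pos rfl]
      have hsum : ∑ i ∈ Finset.univ.erase (y ω), η (y ω) i * ℓ (onehot i) (P (x ω) fstar)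
          = ∑ i ∈ Finset.univ.erase (y ω), η (y ω) i * C₂ := by
        refine Finset.sum_congr rfl fun i hi => ?_
        rw [hω i, if_neg (Finset.ne_of_mem_erase hi)]
      rw [hy, hsum, mul_zero, zero_add, ← Finset.sum_mul,
        sum_erase_eq' η (y ω) (hηrow (y ω))]
      simp only [hdT]
      ring
    -- rewrite the four integrals
    have e1 : Rη fstar = ∫ ω, (∑ i, χ i ω * dT i ω) ∂μ := by
      show (∫ ω, ((1 - η (y ω) (y ω)) * ℓ (onehot (y ω)) (P (x ω) fstar)
        + ∑ i ∈ Finset.univ.erase (y ω), η (y ω) i * ℓ (onehot i) (P (x ω) fstar)) ∂μ) = _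
      exact integral_congr_ae (hfsT.trans (key dT).symm)
    have e2 : Rη feta = ∫ ω, (∑ i, χ i ω * dG i ω) ∂μ := by
      show (∫ ω, ((1 - η (y ω) (y ω)) * ℓ (onehot (y ω)) (P (x ω) feta)
        + ∑ i ∈ Finset.univ.erase (y ω), η (y ω) i * ℓ (onehot i) (P (x ω) feta)) ∂μ) = _
      exact integral_congr_ae (key dG).symm
    have e3 : ∫ ω, (1 - η (y ω) (y ω)) ∂μ = ∫ ω, (∑ i, χ i ω * dA i ω) ∂μ :=
      integral_congr_ae (key dA).symm
    have e4 : ∫ ω, (∑ i ∈ Finset.univ.erase (y ω),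
          (1 - η (y ω) (y ω) - η (y ω) i)) ∂μ
        = ∫ ω, (∑ i, χ i ω * dB i ω) ∂μ :=
      integral_congr_ae (key dB).symm
    rw [e1, e2, e3, e4, ← integral_sub hTi hGi, ← integral_const_mul, ← integral_const_mul,
      ← integral_add (hAi.const_mul _) (hBi.const_mul _)]
    refine integral_mono_ae (hTi.sub hGi)
      ((hAi.const_mul _).add (hBi.const_mul _)) ?_
    filter_upwards [key dT, key dG, key dA, key dB] with ω eT eG eA eB
    rw [eT, eG, eA, eB]
    simp only [hdT, hdA, hdB, hdG]
    exact ptwise' η (fun j => ℓ (onehot j) (P (x ω) feta)) (y ω) C₁ C₂ BL BU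
      (hη0 (y ω)) (hηrow (y ω)) (fun j hj => hηdom (y ω) j hj.symm)
      (fun j => (hcond2 j _).2) (hbounds (x ω) feta).1 hBU
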